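/- (Energy preservation of LinOSS-IMEX.) For all real A ≥ 0 and Δt with Δt²·A ≤ 4, the complex numbers λ^IMEX±(A,Δt) satisfy |λ^IMEX±(A,Δt)| = 1, i.e., the LinOSS-IMEX eigenvalues lie on the complex unit circle. -/

import Mathlib

/-- The LinOSS-IMEX per-component eigenvalues (`s = 1` for `+`, `s = -1` for `−`). -/
noncomputable def lamIMEX (A Δt : ℝ) (s : ℝ) : ℂ :=
  (((2 - Δt ^ 2 * A) / 2 : ℝ) : ℂ) +
    (s : ℂ) * (Complex.I / 2) * ((Real.sqrt (Δt ^ 2 * A * (4 - Δt ^ 2 * A)) : ℝ) : ℂ)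

theorem linossIMEX_energy_preservation (A Δt : ℝ) (hA : 0 ≤ A) (hbound : Δt ^ 2 * A ≤ 4)
    (s : ℝ) (hs : s = 1 ∨ s = -1) :
    ‖lamIMEX A Δt s‖ = 1 := by
  set x := Δt ^ 2 * A with hx
  have hx0 : 0 ≤ x := mul_nonneg (sq_nonneg _) hA
  have hnn : 0 ≤ x * (4 - x) := mul_nonneg hx0 (by linarith)
  have hsq : Real.sqrt (x * (4 - x)) ^ 2 = x * (4 - x) := Real.sq_sqrt hnn
  have hs2 : s ^ 2 = 1 := by rcases hs with h | h <;> simp [h]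
  have h1 : ‖lamIMEX A Δt s‖ ^ 2 = 1 := by
    rw [Complex.sq_norm, Complex.normSq_apply]
    simp only [lamIMEX, ← hx, Complex.add_re, Complex.add_im, Complex.ofReal_re,
      Complex.ofReal_im, Complex.mul_re, Complex.mul_im, Complex.div_re, Complex.div_im,
      Complex.I_re, Complex.I_im, Complex.ofReal_re, Complex.ofReal_im]
    ring_nf
    simp only [Complex.re_ofNat, Complex.im_ofNat, Complex.normSq_ofNat]
    norm_num
    have hsq2 : Real.sqrt (Δt ^ 2 * A * 4 - Δt ^ 4 * A ^ 2) ^ 2 = Δt ^ 2 * A * 4 - Δt ^ 4 * A ^ 2 := Real.sq_sqrt (by nlinarith)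
    nlinarith [hsq2, hs2, Real.sq_sqrt (show (0:ℝ) ≤ x * 4 - x ^ 2 by nlinarith)]
  have habs : 0 ≤ ‖lamIMEX A Δt s‖ := norm_nonneg _
  nlinarith [h1, habs]
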